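/- Fix n ≥ 1 and partitions λ, μ, ν of n. Let ∼_ν denote the equivalence relation on {1,…,n} whose classes are the consecutive blocks of sizes ν_1, ν_2, …, and let S_λ, S_μ ⊆ S_n be the Young subgroups stabilizing ∼_λ, ∼_μ. Then the coefficient of m_λ(X) m_μ(Y) in the expansion of m_ν(XY) (where XY denotes the variables x_i y_j) equals (1/(|S_λ||S_μ|)) · Σ over w ∈ S_n with Part(∼_λ ∩ w(∼_μ)) = ν of |w^{-1} S_λ w ∩ S_μ|. -/

import Mathlib

/-!
STATEMENT 12: Fix `n ≥ 1` and partitions `λ, μ, ν ⊢ n`.  With `∼_λ, ∼_μ` equivalence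
relations on `{1,…,n}` realizing `λ, μ` (consecutive blocks) and `S_λ, S_μ` the
corresponding Young subgroups, the coefficient of `m_λ(X)m_μ(Y)` in `m_ν(XY)` equals
`(1/(|S_λ||S_μ|)) · Σ_{w ∈ S_n, Part(∼_λ ∩ w(∼_μ)) = ν} |w⁻¹ S_λ w ∩ S_μ|`.

The coefficient of the monomial `x^λ y^μ` in `m_ν(XY)` is the number of matrices
`A : Fin n × Fin n → ℕ` whose multiset of nonzero entries is `ν`, with row-sum vector
`λ` (sorted decreasingly, padded by zeros) and column-sum vector `μ`.  The sum over `w`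
with the condition `Part(∼_λ ∩ w(∼_μ)) = ν` is packaged as the cardinality of the set
of pairs `(w, v)` with `v ∈ w⁻¹ S_λ w ∩ S_μ`.
-/


open Finset

section Helpers

variable {α β γ : Type*}

lemma perm_apply_inv_self (f : Equiv.Perm α) (x : α) : f (f⁻¹ x) = x :=
  Equiv.apply_symm_apply f x

lemma mycard_sigma {ι : Type*} [Fintype ι] (f : ι → Type*) [∀ i, Finite (f i)] :
    Nat.card (Σ i, f i) = ∑ i, Nat.card (f i) := by
  classical
  have : ∀ i, Fintype (f i) := fun i => Fintype.ofFinite _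
  simp only [Nat.card_eq_fintype_card, Fintype.card_sigma]

lemma count_bind_repl (s : Multiset ℕ) (k : ℕ) :
    Multiset.count k (s.bind fun j => Multiset.replicate j j) = k * Multiset.count k s := by
  induction s using Multiset.induction with
  | empty => simp
  | cons a s ih =>
      rw [Multiset.cons_bind, Multiset.count_add, Multiset.count_cons, ih,
        Multiset.count_replicate]
      rcases eq_or_ne k a with rfl | h
      · simp [Nat.mul_add, Nat.add_comm]
      · simp [h, Ne.symm h]

lemma count_map_univ [Fintype α] [DecidableEq β] (g : α → β) (k : β) :
    Multiset.count k ((Finset.univ : Finset α).val.map g) = Nat.card {a // g a = k} := by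
  classical
  rw [Multiset.count_map, Nat.card_eq_fintype_card, Fintype.card_subtype]
  congr 1
  simp [Finset.filter, eq_comm]

lemma card_eq_sum_fibers [Fintype β] [Finite α] (f : α → β) :
    Nat.card α = ∑ b, Nat.card {a // f a = b} := by
  rw [← mycard_sigma fun b => {a // f a = b}, Nat.card_congr (Equiv.sigmaFiberEquiv f)]

lemma card_own_fiber [Finite α] [Fintype β] (f : α → β) (k : ℕ) :
    Nat.card {a // Nat.card {x // f x = f a} = k}
      = k * Nat.card {b // Nat.card {x // f x = b} = k} := by
  classical
  set c : β → ℕ := fun b => Nat.card {x // f x = b} with hc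
  have e : {a // c (f a) = k} ≃ Σ b : {b // c b = k}, {x // f x = (b : β)} :=
    { toFun := fun a => ⟨⟨f a.1, a.2⟩, ⟨a.1, rfl⟩⟩
      invFun := fun p => ⟨p.2.1, by
        have h1 : f p.2.1 = (p.1 : β) := p.2.2
        simp only [h1]; exact p.1.2⟩
      left_inv := fun a => rfl
      right_inv := fun p => by
        obtain ⟨⟨b, hb⟩, ⟨x, hx⟩⟩ := p
        simp only at hx
        subst hx
        rfl }
  rw [Nat.card_congr e, mycard_sigma]
  have h2 : ∀ b : {b // c b = k}, Nat.card {x // f x = (b : β)} = k := fun b => b.2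
  rw [Finset.sum_congr rfl fun b _ => h2 b, Finset.sum_const, smul_eq_mul, mul_comm,
    Nat.card_eq_fintype_card, Fintype.card, Finset.card_univ]

end Helpers

section Helpers2

variable {α β : Type*}

/-- Lemma A: the "own fiber size" multiset equals the pattern of `P` iff the
multiset of positive fiber sizes equals `P`. -/
lemma lemmaA [Fintype α] [Fintype β] (f : α → β) (P : Multiset ℕ)
    (hP : ∀ k ∈ P, 0 < k) :
    ((Finset.univ : Finset α).val.map fun a => Nat.card {x // f x = f a})
        = P.bind (fun k => Multiset.replicate k k) ↔
      (((Finset.univ : Finset β).val.map fun b => Nat.card {x // f x = b}).filter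
        (fun a => 0 < a)) = P := by
  classical
  have key : ∀ k : ℕ, 0 < k →
      Multiset.count k ((Finset.univ : Finset α).val.map fun a => Nat.card {x // f x = f a})
        = k * Multiset.count k (((Finset.univ : Finset β).val.map
            fun b => Nat.card {x // f x = b}).filter (fun a => 0 < a)) := by
    intro k hk
    rw [Multiset.count_filter_of_pos hk, count_map_univ, count_map_univ, card_own_fiber]
  constructor
  · intro h
    refine Multiset.ext.2 fun k => ?_
    rcases Nat.eq_zero_or_pos k with rfl | hk
    · rw [Multiset.count_filter_of_neg (by simp), eq_comm, Multiset.count_eq_zero]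
      intro h0
      exact absurd (hP 0 h0) (lt_irrefl 0)
    · have := key k hk
      rw [h, count_bind_repl] at this
      exact (Nat.eq_of_mul_eq_mul_left hk this.symm)
  · intro h
    refine Multiset.ext.2 fun k => ?_
    rcases Nat.eq_zero_or_pos k with rfl | hk
    · have hemp : IsEmpty {a : α // Nat.card {x // f x = f a} = 0} := ⟨fun a => by
        have : Nonempty {x // f x = f a.1} := ⟨⟨a.1, rfl⟩⟩
        exact absurd a.2 (Nat.card_pos).ne'⟩
      rw [count_bind_repl, Nat.zero_mul, count_map_univ, Nat.card_of_isEmpty]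
    · rw [count_bind_repl, ← h, ← key k hk]

/-- lift a list along a multiset map equality -/
lemma exists_list_of_map_eq [DecidableEq α] (c : α → β) :
    ∀ (L : List β) (m : Multiset α), m.map c = ↑L → ∃ l : List α, m = ↑l ∧ l.map c = L := by
  intro L
  induction L with
  | nil =>
      intro m h
      refine ⟨[], ?_, rfl⟩
      have : m.map c = 0 := h
      simpa using (Multiset.map_eq_zero.1 this)
  | cons b L ih =>
      intro m h
      have hb : b ∈ m.map c := by rw [h]; exact List.mem_cons_self
      obtain ⟨a, ham, hca⟩ := Multiset.mem_map.1 hb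
      have h1 : a ::ₘ m.erase a = m := Multiset.cons_erase ham
      have h2 : (m.erase a).map c = ↑L := by
        have : c a ::ₘ (m.erase a).map c = b ::ₘ (L : Multiset β) := by
          rw [← Multiset.map_cons, h1, h]; rfl
        rw [hca] at this
        exact (Multiset.cons_inj_right b).1 this
      obtain ⟨l, hl1, hl2⟩ := ih (m.erase a) h2
      exact ⟨a :: l, by rw [← h1, hl1]; rfl, by simp [hl2, hca]⟩

/-- Gluing: functions with equinumerous fibers differ by a permutation. -/
lemma exists_perm_of_fibers [Finite α] (f g : α → β)
    (h : ∀ b, Nat.card {a // f a = b} = Nat.card {a // g a = b}) :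
    ∃ v : Equiv.Perm α, ∀ x, g (v x) = f x := by
  classical
  have := Fintype.ofFinite α
  have e : ∀ b, {a // f a = b} ≃ {a // g a = b} := fun b =>
    Classical.choice (Finite.card_eq.1 (h b))
  refine ⟨(Equiv.sigmaFiberEquiv f).symm.trans
    ((Equiv.sigmaCongrRight e).trans (Equiv.sigmaFiberEquiv g)), fun x => ?_⟩
  simp only [Equiv.trans_apply, Equiv.sigmaFiberEquiv, Equiv.coe_fn_symm_mk,
    Equiv.sigmaCongrRight_apply, Equiv.coe_fn_mk, Sigma.map]
  exact (e (f x) ⟨x, rfl⟩).2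

/-- Partition a finite type into fibers of prescribed sizes. -/
lemma exists_fn_of_card [Finite α] {ι : Type*} [Fintype ι] [DecidableEq ι] (c : ι → ℕ)
    (h : Nat.card α = ∑ i, c i) :
    ∃ G : α → ι, ∀ i, Nat.card {a // G a = i} = c i := by
  classical
  have := Fintype.ofFinite α
  have hcard : Nat.card α = Nat.card (Σ i, Fin (c i)) := by
    rw [mycard_sigma]; simpa using h
  obtain ⟨e⟩ := Finite.card_eq.1 hcard
  refine ⟨fun a => (e a).1, fun i => ?_⟩
  have e2 : {a // (e a).1 = i} ≃ {p : Σ j, Fin (c j) // p.1 = i} :=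
    e.subtypeEquiv (fun a => Iff.rfl)
  have e3 : {p : Σ j, Fin (c j) // p.1 = i} ≃ Fin (c i) :=
    { toFun := fun p => (congrArg (fun j => Fin (c j)) p.2) ▸ p.1.2
      invFun := fun x => ⟨⟨i, x⟩, rfl⟩
      left_inv := fun p => by
        obtain ⟨⟨j, x⟩, hj⟩ := p
        simp only at hj
        subst hj
        rfl
      right_inv := fun x => rfl }
  rw [Nat.card_congr (e2.trans e3), Nat.card_eq_fintype_card, Fintype.card_fin]

/-- fiber of the first component as a sum. -/
lemma card_fst_fiber [Finite α] {ι κ : Type*} [Fintype κ] (F : α → ι × κ) (r : ι) :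
    Nat.card {x // (F x).1 = r} = ∑ s, Nat.card {x // F x = (r, s)} := by
  classical
  rw [← mycard_sigma fun s => {x // F x = (r, s)}]
  refine Nat.card_congr ?_
  exact
    { toFun := fun x => ⟨(F x.1).2, x.1, Prod.ext x.2 rfl⟩
      invFun := fun p => ⟨p.2.1, by rw [p.2.2]⟩
      left_inv := fun x => rfl
      right_inv := fun p => by
        obtain ⟨s, x, hx⟩ := p
        have hs : (F x).2 = s := by rw [hx]
        subst hs
        rfl }

lemma card_snd_fiber [Finite α] {ι κ : Type*} [Fintype ι] (F : α → ι × κ) (s : κ) :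
    Nat.card {x // (F x).2 = s} = ∑ r, Nat.card {x // F x = (r, s)} := by
  classical
  rw [← mycard_sigma fun r => {x // F x = (r, s)}]
  refine Nat.card_congr ?_
  exact
    { toFun := fun x => ⟨(F x.1).1, x.1, Prod.ext rfl x.2⟩
      invFun := fun p => ⟨p.2.1, by rw [p.2.2]⟩
      left_inv := fun x => rfl
      right_inv := fun p => by
        obtain ⟨r, x, hx⟩ := p
        have hr : (F x).1 = r := by rw [hx]
        subst hr
        rfl }

end Helpers2

/-- The multiset recording, for each `i`, the size of the class of `i`:
it equals `ν₁,…,ν₁,ν₂,…` (each class size `k` repeated `k` times) iff the class sizes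
realize the partition `ν`. -/
noncomputable def classSizes (n : ℕ) (R : Fin n → Fin n → Prop) : Multiset ℕ :=
  (Finset.univ : Finset (Fin n)).val.map fun i => Nat.card {j : Fin n // R i j}

/-- The target pattern of `classSizes` for a partition `ν`: each part `k` contributes
`k` copies of `k`. -/
def pattern {n : ℕ} (ν : n.Partition) : Multiset ℕ :=
  ν.parts.bind fun k => Multiset.replicate k k

/-- The Young subgroup (as a set of permutations) attached to an equivalence
relation `R`: permutations preserving every class. -/
def young (n : ℕ) (R : Fin n → Fin n → Prop) : Set (Equiv.Perm (Fin n)) :=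
  {w | ∀ i, R (w i) i}

/-- The sorted (decreasing) vector of parts of `λ`, padded with zeros to length `n`. -/
def paddedParts {n : ℕ} (lam : n.Partition) : List ℕ :=
  (lam.parts.sort (· ≤ ·)).reverse ++ List.replicate (n - Multiset.card lam.parts) 0

lemma multiset_card_le_sum (s : Multiset ℕ) (h : ∀ x ∈ s, 0 < x) : Multiset.card s ≤ s.sum := by
  induction s using Multiset.induction with
  | empty => simp
  | cons a t ih =>
      simp only [Multiset.card_cons, Multiset.sum_cons]
      have ha := h a (Multiset.mem_cons_self a t)
      have := ih fun x hx => h x (Multiset.mem_cons_of_mem hx)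
      omega

lemma padded_getD_of_ge {n : ℕ} (lam : n.Partition) (k : ℕ)
    (hk : Multiset.card lam.parts ≤ k) : (paddedParts lam).getD k 0 = 0 := by
  classical
  have hlen : (lam.parts.sort (· ≤ ·)).reverse.length = Multiset.card lam.parts := by
    rw [List.length_reverse, Multiset.length_sort]
  rw [paddedParts, List.getD_append_right _ _ _ _ (by rw [hlen]; exact hk)]
  rcases lt_or_ge (k - (lam.parts.sort (· ≤ ·)).reverse.length)
      (List.replicate (n - Multiset.card lam.parts) (0:ℕ)).length with h | h
  · rw [List.getD_eq_getElem _ _ h, List.getElem_replicate]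
  · rw [List.getD_eq_default _ _ h]

/-- From the `classSizes` hypothesis, produce a coloring realizing the partition. -/
lemma exists_coloring {n : ℕ} (R : Fin n → Fin n → Prop) (hR : Equivalence R)
    (lam : n.Partition) (h : classSizes n R = pattern lam) :
    ∃ cl : Fin n → Fin n, (∀ i j, R i j ↔ cl i = cl j) ∧
      ∀ r : Fin n, Nat.card {i // cl i = r} = (paddedParts lam).getD (r : ℕ) 0 := by
  classical
  haveI : Fintype (Set (Fin n)) := Fintype.ofFinite _
  set f : Fin n → Set (Fin n) := fun i => {j | R i j} with hf
  have hfiff : ∀ i j, R i j ↔ f i = f j := by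
    intro i j
    constructor
    · intro hij
      ext x
      exact ⟨fun hx => hR.trans (hR.symm hij) hx, fun hx => hR.trans hij hx⟩
    · intro hij
      have : j ∈ f j := hR.refl j
      rw [← hij] at this
      exact this
  set c : Set (Fin n) → ℕ := fun b => Nat.card {x // f x = b} with hc
  have hcs : classSizes n R = (Finset.univ : Finset (Fin n)).val.map fun i => c (f i) := by
    refine Multiset.map_congr rfl fun i _ => ?_
    refine Nat.card_congr (Equiv.subtypeEquivRight fun j => ?_)
    rw [hfiff i j, eq_comm]
  have hA := (lemmaA f lam.parts (fun k hk => lam.parts_pos hk)).1 (by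
    rw [← hcs, h]; rfl)
  -- convert filter of map into map over a filtered finset
  have hswap : ((Finset.univ : Finset (Set (Fin n))).val.map c).filter (fun a => 0 < a)
      = ((Finset.univ.filter fun b => 0 < c b) : Finset (Set (Fin n))).val.map c := by
    rw [Finset.filter_val, Multiset.filter_map]
    rfl
  set sortedDesc : List ℕ := (lam.parts.sort (· ≤ ·)).reverse with hsd
  have hcoe : (↑sortedDesc : Multiset ℕ) = lam.parts := by
    rw [hsd, Multiset.coe_reverse, Multiset.sort_eq]
  have hmap : (((Finset.univ.filter fun b => 0 < c b) : Finset (Set (Fin n))).val.map c)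
      = ↑sortedDesc := by rw [← hswap, hA, hcoe]
  obtain ⟨l, hl, hlmap⟩ := exists_list_of_map_eq c sortedDesc _ hmap
  have hnodup : l.Nodup := by
    rw [← Multiset.coe_nodup, ← hl]
    exact (Finset.filter _ _).nodup
  have hlength : l.length = Multiset.card lam.parts := by
    have := congrArg List.length hlmap
    rw [List.length_map] at this
    rw [this, hsd, List.length_reverse, Multiset.length_sort]
  have hcardle : Multiset.card lam.parts ≤ n := by
    have := multiset_card_le_sum lam.parts fun x hx => lam.parts_pos hx
    rw [lam.parts_sum] at this
    exact this
  have hmem : ∀ i, f i ∈ l := by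
    intro i
    rw [← Multiset.mem_coe, ← hl, Finset.mem_val, Finset.mem_filter]
    haveI : Nonempty {x // f x = f i} := ⟨⟨i, rfl⟩⟩
    exact ⟨Finset.mem_univ _, Nat.card_pos (α := {x // f x = f i})⟩
  have hlt : ∀ i, List.idxOf (f i) l < n :=
    fun i => lt_of_lt_of_le (List.idxOf_lt_length_iff.2 (hmem i)) (hlength ▸ hcardle)
  refine ⟨fun i => ⟨List.idxOf (f i) l, hlt i⟩, fun i j => ?_, fun r => ?_⟩
  · rw [hfiff i j]
    simp only [Fin.mk.injEq]
    exact (List.idxOf_inj (hmem i)).symm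
  · rcases lt_or_ge (r : ℕ) l.length with hr | hr
    · set b : Set (Fin n) := l[(r : ℕ)]'hr with hb
      have hiff : ∀ i, (⟨List.idxOf (f i) l, hlt i⟩ : Fin n) = r ↔ f i = b := by
        intro i
        rw [Fin.ext_iff]
        simp only
        constructor
        · intro hidx
          have h1 := List.idxOf_get (List.idxOf_lt_length_iff.2 (hmem i))
          rw [show (⟨List.idxOf (f i) l, List.idxOf_lt_length_iff.2 (hmem i)⟩ : Fin l.length)
              = ⟨(r : ℕ), hr⟩ from Fin.ext hidx] at h1
          rw [← h1, hb, List.get_eq_getElem]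
        · intro hfi
          rw [hfi, hb]
          have := List.get_idxOf hnodup ⟨(r : ℕ), hr⟩
          rwa [List.get_eq_getElem] at this
      have hcard : Nat.card {i // (⟨List.idxOf (f i) l, hlt i⟩ : Fin n) = r} = c b :=
        Nat.card_congr (Equiv.subtypeEquivRight hiff)
      rw [hcard]
      have hr2 : (r : ℕ) < sortedDesc.length := by rw [← hlmap, List.length_map]; exact hr
      have hr3 : (r : ℕ) < (List.map c l).length := by rw [List.length_map]; exact hr
      have hcb : c b = sortedDesc.getD (r : ℕ) 0 := by
        rw [← hlmap, List.getD_eq_getElem _ _ hr3, List.getElem_map]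
      rw [hcb, paddedParts, List.getD_append _ _ _ _ (by simpa [hsd] using hr2)]
    · have hemp : IsEmpty {i // (⟨List.idxOf (f i) l, hlt i⟩ : Fin n) = r} := by
        refine ⟨fun i => ?_⟩
        have h1 : List.idxOf (f i.1) l < l.length := List.idxOf_lt_length_iff.2 (hmem i.1)
        have h2 : List.idxOf (f i.1) l = (r : ℕ) := by
          have := i.2
          rwa [Fin.ext_iff] at this
        omega
      rw [Nat.card_of_isEmpty, padded_getD_of_ge lam _ (by rw [← hlength]; exact hr)]

section Core

variable {n : ℕ}

/-- intersection matrix of a permutation w.r.t. two colorings -/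
noncomputable def matOf (cl cm : Fin n → Fin n) (w : Equiv.Perm (Fin n)) :
    Fin n → Fin n → ℕ :=
  fun r s => Nat.card {x : Fin n // cl (w x) = r ∧ cm x = s}

lemma matOf_eq_pair_fiber (cl cm : Fin n → Fin n) (w : Equiv.Perm (Fin n)) (r s : Fin n) :
    matOf cl cm w r s = Nat.card {x : Fin n // (fun x => (cl (w x), cm x)) x = (r, s)} := by
  exact Nat.card_congr (Equiv.subtypeEquivRight fun x => by
    rw [Prod.mk.injEq])

lemma matOf_rowsum (cl cm : Fin n → Fin n) (w : Equiv.Perm (Fin n)) (r : Fin n) :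
    ∑ s, matOf cl cm w r s = Nat.card {x : Fin n // cl x = r} := by
  classical
  have h1 : ∑ s, matOf cl cm w r s
      = Nat.card {x : Fin n // ((fun x => (cl (w x), cm x)) x).1 = r} := by
    rw [card_fst_fiber]
    exact Finset.sum_congr rfl fun s _ => matOf_eq_pair_fiber cl cm w r s
  rw [h1]
  exact Nat.card_congr (Equiv.subtypeEquiv w fun x => Iff.rfl)

lemma matOf_colsum (cl cm : Fin n → Fin n) (w : Equiv.Perm (Fin n)) (s : Fin n) :
    ∑ r, matOf cl cm w r s = Nat.card {x : Fin n // cm x = s} := by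
  classical
  have h1 : ∑ r, matOf cl cm w r s
      = Nat.card {x : Fin n // ((fun x => (cl (w x), cm x)) x).2 = s} := by
    rw [card_snd_fiber]
    exact Finset.sum_congr rfl fun r _ => matOf_eq_pair_fiber cl cm w r s
  rw [h1]

lemma matOf_invariance (cl cm : Fin n → Fin n) (a b w : Equiv.Perm (Fin n))
    (ha : ∀ i, cl (a i) = cl i) (hb : ∀ i, cm (b i) = cm i) :
    matOf cl cm (a * w * b⁻¹) = matOf cl cm w := by
  funext r s
  refine Nat.card_congr (Equiv.subtypeEquiv b⁻¹ fun x => ?_)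
  simp only [Equiv.Perm.mul_apply]
  constructor
  · rintro ⟨h1, h2⟩
    refine ⟨by rw [← ha (w (b⁻¹ x))]; exact h1, ?_⟩
    rw [← h2, ← hb (b⁻¹ x), perm_apply_inv_self]
  · rintro ⟨h1, h2⟩
    refine ⟨by rw [ha (w (b⁻¹ x))]; exact h1, ?_⟩
    rw [← h2, ← hb (b⁻¹ x), perm_apply_inv_self]

lemma matOf_trans (cl cm : Fin n → Fin n) (w w' : Equiv.Perm (Fin n))
    (h : matOf cl cm w = matOf cl cm w') :
    ∃ a b : Equiv.Perm (Fin n), (∀ i, cl (a i) = cl i) ∧ (∀ i, cm (b i) = cm i) ∧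
      w' = a * w * b⁻¹ := by
  classical
  have hfib : ∀ p : Fin n × Fin n,
      Nat.card {x // (fun x => (cl (w x), cm x)) x = p}
        = Nat.card {x // (fun x => (cl (w' x), cm x)) x = p} := by
    rintro ⟨r, s⟩
    rw [← matOf_eq_pair_fiber, ← matOf_eq_pair_fiber, h]
  obtain ⟨v, hv⟩ := exists_perm_of_fibers _ _ hfib
  have hv1 : ∀ x, cl (w' (v x)) = cl (w x) := fun x => congrArg Prod.fst (hv x)
  have hv2 : ∀ x, cm (v x) = cm x := fun x => congrArg Prod.snd (hv x)
  refine ⟨w' * v * w⁻¹, v, fun y => ?_, hv2, by group⟩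
  simp only [Equiv.Perm.mul_apply]
  rw [hv1 (w⁻¹ y), perm_apply_inv_self]

lemma matOf_realize (cl cm : Fin n → Fin n) (A : Fin n → Fin n → ℕ)
    (hrow : ∀ r, ∑ s, A r s = Nat.card {x : Fin n // cl x = r})
    (hcol : ∀ s, ∑ r, A r s = Nat.card {x : Fin n // cm x = s}) :
    ∃ w : Equiv.Perm (Fin n), matOf cl cm w = A := by
  classical
  have htot : Nat.card (Fin n) = ∑ p : Fin n × Fin n, A p.1 p.2 := by
    rw [card_eq_sum_fibers cl, Fintype.sum_prod_type]
    exact Finset.sum_congr rfl fun r _ => (hrow r).symm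
  obtain ⟨K, hK⟩ := exists_fn_of_card (fun p : Fin n × Fin n => A p.1 p.2) htot
  have hsnd : ∀ s, Nat.card {x // (K x).2 = s} = Nat.card {x : Fin n // cm x = s} := by
    intro s
    rw [card_snd_fiber, ← hcol s]
    exact Finset.sum_congr rfl fun r _ => hK (r, s)
  obtain ⟨v, hvK⟩ := exists_perm_of_fibers cm (fun x => (K x).2) (fun s => (hsnd s).symm)
  set H : Fin n → Fin n × Fin n := fun x => K (v x) with hH
  have hHfib : ∀ p, Nat.card {x // H x = p} = A p.1 p.2 := by
    intro p
    rw [← hK p]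
    exact Nat.card_congr (Equiv.subtypeEquiv v fun x => Iff.rfl)
  have hHsnd : ∀ x, (H x).2 = cm x := fun x => hvK x
  have hfst : ∀ r, Nat.card {x // (H x).1 = r} = Nat.card {x : Fin n // cl x = r} := by
    intro r
    rw [card_fst_fiber, ← hrow r]
    exact Finset.sum_congr rfl fun s _ => hHfib (r, s)
  obtain ⟨w, hw⟩ := exists_perm_of_fibers (fun x => (H x).1) cl (fun r => hfst r)
  -- hw : ∀ x, cl (w x) = (H x).1
  refine ⟨w, ?_⟩
  funext r s
  rw [← hHfib (r, s)]
  refine Nat.card_congr (Equiv.subtypeEquivRight fun x => ?_)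
  constructor
  · rintro ⟨h1, h2⟩
    exact Prod.ext (by rw [← hw x]; exact h1) (by rw [hHsnd, h2])
  · intro hp
    exact ⟨by rw [hw x, hp], by rw [← hHsnd, hp]⟩

end Core

section PA

variable {n : ℕ}

lemma cl_inv_mem (cl : Fin n → Fin n) (u : Equiv.Perm (Fin n))
    (h : ∀ i, cl (u i) = cl i) : ∀ i, cl (u⁻¹ i) = cl i := by
  intro i
  have h2 := h (u⁻¹ i)
  rw [perm_apply_inv_self] at h2
  exact h2.symm

lemma PA_card (cl cm : Fin n → Fin n) (A : Fin n → Fin n → ℕ) (wA : Equiv.Perm (Fin n))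
    (hwA : matOf cl cm wA = A) :
    Nat.card {p : Equiv.Perm (Fin n) × Equiv.Perm (Fin n) //
        matOf cl cm p.1 = A ∧ (∀ i, cl (p.1 (p.2 (p.1⁻¹ i))) = cl i) ∧
        (∀ i, cm (p.2 i) = cm i)}
      = Nat.card {a : Equiv.Perm (Fin n) // ∀ i, cl (a i) = cl i}
        * Nat.card {b : Equiv.Perm (Fin n) // ∀ i, cm (b i) = cm i} := by
  classical
  set Yl := {a : Equiv.Perm (Fin n) // ∀ i, cl (a i) = cl i} with hYl
  set Ym := {b : Equiv.Perm (Fin n) // ∀ i, cm (b i) = cm i} with hYm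
  have hsec : ∀ w : Equiv.Perm (Fin n), matOf cl cm w = A →
      ∃ q : Yl × Ym, w = q.1.1 * wA * q.2.1⁻¹ := by
    intro w hw
    obtain ⟨a, b, ha, hb, hab⟩ := matOf_trans cl cm wA w (hwA.trans hw.symm)
    exact ⟨(⟨a, ha⟩, ⟨b, hb⟩), hab⟩
  obtain ⟨S, hSspec⟩ : ∃ S : Equiv.Perm (Fin n) → Yl × Ym,
      ∀ w, matOf cl cm w = A → w = (S w).1.1 * wA * (S w).2.1⁻¹ := by
    choose S' hS' using hsec
    refine ⟨fun w => if h : matOf cl cm w = A then S' w h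
      else (⟨1, fun i => rfl⟩, ⟨1, fun i => rfl⟩), fun w h => ?_⟩
    simp only [dif_pos h]
    exact hS' w h
  -- the image proof of the forward map
  have hpf : ∀ (a : Yl) (b : Ym),
      matOf cl cm (a.1 * wA * b.1⁻¹) = A ∧
      (∀ i, cl ((a.1 * wA * b.1⁻¹) (((b.1 * (S (a.1 * wA * b.1⁻¹)).2.1⁻¹))
          ((a.1 * wA * b.1⁻¹)⁻¹ i))) = cl i) ∧
      (∀ i, cm ((b.1 * (S (a.1 * wA * b.1⁻¹)).2.1⁻¹) i) = cm i) := by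
    intro a b
    set w : Equiv.Perm (Fin n) := a.1 * wA * b.1⁻¹ with hwdef
    set q : Yl × Ym := S w with hqdef
    have hw : matOf cl cm w = A := by
      rw [hwdef, matOf_invariance cl cm a.1 b.1 wA a.2 b.2, hwA]
    have hq : w = q.1.1 * wA * q.2.1⁻¹ := hSspec w hw
    refine ⟨hw, ?_, ?_⟩
    · intro i
      have e2 : w⁻¹ = q.2.1 * wA⁻¹ * q.1.1⁻¹ := by rw [hq]; group
      have hprod : w * (b.1 * q.2.1⁻¹) * w⁻¹ = a.1 * q.1.1⁻¹ := by
        rw [e2, hwdef]; group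
      show cl ((w * (b.1 * q.2.1⁻¹) * w⁻¹) i) = cl i
      rw [hprod]
      show cl (a.1 (q.1.1⁻¹ i)) = cl i
      rw [a.2 (q.1.1⁻¹ i)]
      exact cl_inv_mem cl q.1.1 q.1.2 i
    · intro i
      show cm (b.1 (q.2.1⁻¹ i)) = cm i
      rw [b.2 (q.2.1⁻¹ i)]
      exact cl_inv_mem cm q.2.1 q.2.2 i
  set P := {p : Equiv.Perm (Fin n) × Equiv.Perm (Fin n) //
      matOf cl cm p.1 = A ∧ (∀ i, cl (p.1 (p.2 (p.1⁻¹ i))) = cl i) ∧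
      (∀ i, cm (p.2 i) = cm i)} with hP
  have hbij : Function.Bijective (fun ab : Yl × Ym =>
      (⟨(ab.1.1 * wA * ab.2.1⁻¹,
          ab.2.1 * (S (ab.1.1 * wA * ab.2.1⁻¹)).2.1⁻¹), hpf ab.1 ab.2⟩ : P)) := by
    constructor
    · rintro ⟨a, b⟩ ⟨a', b'⟩ h
      have h0 := congrArg Subtype.val h
      simp only at h0
      have h1 : a.1 * wA * b.1⁻¹ = a'.1 * wA * b'.1⁻¹ := congrArg Prod.fst h0
      have h2 := congrArg Prod.snd h0
      simp only at h2
      rw [h1] at h2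
      have hb : b.1 = b'.1 := mul_right_cancel h2
      have ha : a.1 = a'.1 := by
        rw [hb] at h1
        have := mul_right_cancel h1
        exact mul_right_cancel this
      exact Prod.ext (Subtype.ext ha) (Subtype.ext hb)
    · rintro ⟨⟨w, v⟩, hmat, hconj, hcm⟩
      obtain ⟨q, hqS⟩ : ∃ q : Yl × Ym, q = S w := ⟨S w, rfl⟩
      have hq : w = q.1.1 * wA * q.2.1⁻¹ := by rw [hqS]; exact hSspec w hmat
      have e3 : wA⁻¹ = q.2.1⁻¹ * w⁻¹ * q.1.1 := by rw [hq]; group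
      refine ⟨(⟨w * (v * q.2.1) * wA⁻¹, ?_⟩, ⟨v * q.2.1, ?_⟩), ?_⟩
      · intro j
        have e4 : w * (v * q.2.1) * wA⁻¹ = (w * v * w⁻¹) * q.1.1 := by
          rw [e3]; group
        rw [e4]
        exact (hconj (q.1.1 j)).trans (q.1.2 j)
      · intro j
        exact (hcm (q.2.1 j)).trans (q.2.2 j)
      · refine Subtype.ext ?_
        simp only
        have hfst : (w * (v * q.2.1) * wA⁻¹) * wA * (v * q.2.1)⁻¹ = w := by group
        refine Prod.ext hfst ?_
        simp only
        rw [hfst, ← hqS]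
        group
  rw [← Nat.card_prod]
  exact (Nat.card_congr (Equiv.ofBijective _ hbij)).symm

end PA

section KeyCount

variable {n : ℕ}

lemma key_count (cl cm : Fin n → Fin n) (ν : Multiset ℕ) :
    Nat.card {p : Equiv.Perm (Fin n) × Equiv.Perm (Fin n) //
        ((((Finset.univ : Finset (Fin n × Fin n)).val.map
            fun q => matOf cl cm p.1 q.1 q.2).filter (fun a => 0 < a)) = ν) ∧
        (∀ i, cl (p.1 (p.2 (p.1⁻¹ i))) = cl i) ∧ (∀ i, cm (p.2 i) = cm i)}
    = Nat.card {A : Fin n → Fin n → ℕ //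
        ((((Finset.univ : Finset (Fin n × Fin n)).val.map fun q => A q.1 q.2).filter
          (fun a => 0 < a)) = ν) ∧
        (∀ r, ∑ s, A r s = Nat.card {x : Fin n // cl x = r}) ∧
        (∀ s, ∑ r, A r s = Nat.card {x : Fin n // cm x = s})}
      * (Nat.card {a : Equiv.Perm (Fin n) // ∀ i, cl (a i) = cl i}
        * Nat.card {b : Equiv.Perm (Fin n) // ∀ i, cm (b i) = cm i}) := by
  classical
  set M := {A : Fin n → Fin n → ℕ //
      ((((Finset.univ : Finset (Fin n × Fin n)).val.map fun q => A q.1 q.2).filter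
        (fun a => 0 < a)) = ν) ∧
      (∀ r, ∑ s, A r s = Nat.card {x : Fin n // cl x = r}) ∧
      (∀ s, ∑ r, A r s = Nat.card {x : Fin n // cm x = s})} with hM
  -- M is finite: entries are bounded by n
  have hbound : ∀ (A : M) (r s : Fin n), A.1 r s ≤ n := by
    intro A r s
    have h1 : A.1 r s ≤ ∑ s', A.1 r s' :=
      Finset.single_le_sum (fun _ _ => Nat.zero_le _) (Finset.mem_univ s)
    rw [A.2.2.1 r] at h1
    refine h1.trans ?_
    have h2 : Nat.card {x : Fin n // cl x = r} ≤ Nat.card (Fin n) :=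
      Nat.card_le_card_of_injective Subtype.val Subtype.val_injective
    exact h2.trans_eq (by simp)
  haveI hMfin : Finite M := by
    refine Finite.of_injective (fun A : M =>
      (fun r s => (⟨A.1 r s, Nat.lt_succ_of_le (hbound A r s)⟩ : Fin (n+1))
        : Fin n → Fin n → Fin (n+1))) ?_
    intro A B h
    refine Subtype.ext (funext fun r => funext fun s => ?_)
    exact congrArg Fin.val (congrFun (congrFun h r) s)
  haveI : Fintype M := Fintype.ofFinite M
  set π : {p : Equiv.Perm (Fin n) × Equiv.Perm (Fin n) //
        ((((Finset.univ : Finset (Fin n × Fin n)).val.map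
            fun q => matOf cl cm p.1 q.1 q.2).filter (fun a => 0 < a)) = ν) ∧
        (∀ i, cl (p.1 (p.2 (p.1⁻¹ i))) = cl i) ∧ (∀ i, cm (p.2 i) = cm i)} → M :=
    fun p => ⟨matOf cl cm p.1.1, p.2.1, matOf_rowsum cl cm p.1.1, matOf_colsum cl cm p.1.1⟩
    with hπ
  rw [card_eq_sum_fibers π]
  have hfib : ∀ A : M, Nat.card {p // π p = A}
      = Nat.card {a : Equiv.Perm (Fin n) // ∀ i, cl (a i) = cl i}
        * Nat.card {b : Equiv.Perm (Fin n) // ∀ i, cm (b i) = cm i} := by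
    intro A
    obtain ⟨wA, hwA⟩ := matOf_realize cl cm A.1 A.2.2.1 A.2.2.2
    rw [← PA_card cl cm A.1 wA hwA]
    refine Nat.card_congr ?_
    refine
      { toFun := fun pp => ⟨pp.1.1, Subtype.ext_iff.1 pp.2, pp.1.2.2.1, pp.1.2.2.2⟩
        invFun := fun q => ⟨⟨q.1, by rw [q.2.1]; exact A.2.1, q.2.2.1, q.2.2.2⟩,
          Subtype.ext q.2.1⟩
        left_inv := fun pp => by
          refine Subtype.ext (Subtype.ext rfl)
        right_inv := fun q => rfl }
  rw [Finset.sum_congr rfl fun A _ => hfib A, Finset.sum_const, smul_eq_mul,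
    Finset.card_univ]
  simp [Nat.card_eq_fintype_card]

end KeyCount

theorem stmt_12 (n : ℕ) (hn : 1 ≤ n) (lam mu nu : n.Partition)
    (Rl Rm : Fin n → Fin n → Prop)
    (hRl : Equivalence Rl) (hRm : Equivalence Rm)
    -- `∼_λ` and `∼_μ` realize the partitions `λ` and `μ`
    (hlam : classSizes n Rl = pattern lam)
    (hmu : classSizes n Rm = pattern mu) :
    -- coefficient of `m_λ(X) m_μ(Y)` in `m_ν(XY)`, as a matrix count
    (Nat.card {A : Fin n → Fin n → ℕ //
        (((Finset.univ : Finset (Fin n × Fin n)).val.map fun p => A p.1 p.2).filter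
            (fun a => 0 < a)) = nu.parts ∧
        (∀ i : Fin n, (∑ j, A i j) = (paddedParts lam).getD i 0) ∧
        (∀ j : Fin n, (∑ i, A i j) = (paddedParts mu).getD j 0)} : ℚ)
    =
    (1 / ((Nat.card (young n Rl) : ℚ) * (Nat.card (young n Rm) : ℚ))) *
      (Nat.card {p : Equiv.Perm (Fin n) × Equiv.Perm (Fin n) //
        classSizes n (fun i j => Rl i j ∧ Rm (p.1⁻¹ i) (p.1⁻¹ j)) = pattern nu ∧
        (∀ i, Rl ((p.1 * p.2 * p.1⁻¹) i) i) ∧ (∀ i, Rm (p.2 i) i)} : ℚ) := by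
  classical
  obtain ⟨cl, hcl, hclcard⟩ := exists_coloring Rl hRl lam hlam
  obtain ⟨cm, hcm, hcmcard⟩ := exists_coloring Rm hRm mu hmu
  -- translate the matrix count
  have hMcard : Nat.card {A : Fin n → Fin n → ℕ //
        (((Finset.univ : Finset (Fin n × Fin n)).val.map fun p => A p.1 p.2).filter
            (fun a => 0 < a)) = nu.parts ∧
        (∀ i : Fin n, (∑ j, A i j) = (paddedParts lam).getD i 0) ∧
        (∀ j : Fin n, (∑ i, A i j) = (paddedParts mu).getD j 0)}
      = Nat.card {A : Fin n → Fin n → ℕ //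
        ((((Finset.univ : Finset (Fin n × Fin n)).val.map fun q => A q.1 q.2).filter
          (fun a => 0 < a)) = nu.parts) ∧
        (∀ r, ∑ s, A r s = Nat.card {x : Fin n // cl x = r}) ∧
        (∀ s, ∑ r, A r s = Nat.card {x : Fin n // cm x = s})} := by
    refine Nat.card_congr (Equiv.subtypeEquivRight fun A => ?_)
    constructor
    · rintro ⟨h1, h2, h3⟩
      exact ⟨h1, fun r => (h2 r).trans (hclcard r).symm,
        fun s => (h3 s).trans (hcmcard s).symm⟩
    · rintro ⟨h1, h2, h3⟩
      exact ⟨h1, fun r => (h2 r).trans (hclcard r),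
        fun s => (h3 s).trans (hcmcard s)⟩
  -- translate the pair count
  have hcF : ∀ (w : Equiv.Perm (Fin n)) (r s : Fin n),
      Nat.card {j : Fin n // (fun j => (cl j, cm (w⁻¹ j))) j = (r, s)}
        = matOf cl cm w r s := by
    intro w r s
    refine Nat.card_congr (Equiv.subtypeEquiv (w⁻¹ : Equiv.Perm (Fin n)) fun j => ?_)
    simp only [Prod.mk.injEq]
    constructor
    · rintro ⟨h1, h2⟩
      exact ⟨by rw [perm_apply_inv_self]; exact h1, h2⟩
    · rintro ⟨h1, h2⟩
      exact ⟨by rw [← h1, perm_apply_inv_self], h2⟩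
  have hPiff : ∀ p : Equiv.Perm (Fin n) × Equiv.Perm (Fin n),
      (classSizes n (fun i j => Rl i j ∧ Rm (p.1⁻¹ i) (p.1⁻¹ j)) = pattern nu ∧
        (∀ i, Rl ((p.1 * p.2 * p.1⁻¹) i) i) ∧ (∀ i, Rm (p.2 i) i))
      ↔ (((((Finset.univ : Finset (Fin n × Fin n)).val.map
            fun q => matOf cl cm p.1 q.1 q.2).filter (fun a => 0 < a)) = nu.parts) ∧
        (∀ i, cl (p.1 (p.2 (p.1⁻¹ i))) = cl i) ∧ (∀ i, cm (p.2 i) = cm i)) := by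
    rintro ⟨w, v⟩
    have hclassSizes : classSizes n (fun i j => Rl i j ∧ Rm (w⁻¹ i) (w⁻¹ j))
        = (Finset.univ : Finset (Fin n)).val.map
            fun i => Nat.card {j : Fin n //
              (fun j => (cl j, cm (w⁻¹ j))) j = (fun j => (cl j, cm (w⁻¹ j))) i} := by
      refine Multiset.map_congr rfl fun i _ => ?_
      refine Nat.card_congr (Equiv.subtypeEquivRight fun j => ?_)
      simp only [Prod.mk.injEq]
      rw [hcl i j, hcm (w⁻¹ i) (w⁻¹ j)]
      constructor
      · rintro ⟨h1, h2⟩; exact ⟨h1.symm, h2.symm⟩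
      · rintro ⟨h1, h2⟩; exact ⟨h1.symm, h2.symm⟩
    have hmapeq : ((Finset.univ : Finset (Fin n × Fin n)).val.map
          fun b => Nat.card {x : Fin n // (fun j => (cl j, cm (w⁻¹ j))) x = b})
        = ((Finset.univ : Finset (Fin n × Fin n)).val.map
          fun q => matOf cl cm w q.1 q.2) := by
      refine Multiset.map_congr rfl fun b _ => ?_
      obtain ⟨r, s⟩ := b
      exact hcF w r s
    have h1 := lemmaA (fun j : Fin n => (cl j, cm (w⁻¹ j))) nu.parts
      (fun k hk => nu.parts_pos hk)
    rw [hmapeq] at h1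
    constructor
    · rintro ⟨hc1, hc2, hc3⟩
      refine ⟨h1.1 (by rw [← hclassSizes]; exact hc1), fun i => ?_, fun i => ?_⟩
      · have := hc2 i
        rw [hcl ((w * v * w⁻¹) i) i] at this
        exact this
      · have := hc3 i
        rw [hcm (v i) i] at this
        exact this
    · rintro ⟨hc1, hc2, hc3⟩
      refine ⟨by rw [hclassSizes]; exact h1.2 hc1, fun i => ?_, fun i => ?_⟩
      · rw [hcl ((w * v * w⁻¹) i) i]
        exact hc2 i
      · rw [hcm (v i) i]
        exact hc3 i
  have hPcard : Nat.card {p : Equiv.Perm (Fin n) × Equiv.Perm (Fin n) //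
        classSizes n (fun i j => Rl i j ∧ Rm (p.1⁻¹ i) (p.1⁻¹ j)) = pattern nu ∧
        (∀ i, Rl ((p.1 * p.2 * p.1⁻¹) i) i) ∧ (∀ i, Rm (p.2 i) i)}
      = Nat.card {p : Equiv.Perm (Fin n) × Equiv.Perm (Fin n) //
        ((((Finset.univ : Finset (Fin n × Fin n)).val.map
            fun q => matOf cl cm p.1 q.1 q.2).filter (fun a => 0 < a)) = nu.parts) ∧
        (∀ i, cl (p.1 (p.2 (p.1⁻¹ i))) = cl i) ∧ (∀ i, cm (p.2 i) = cm i)} :=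
    Nat.card_congr (Equiv.subtypeEquivRight hPiff)
  -- young subgroup cards
  have hYl : Nat.card (young n Rl)
      = Nat.card {a : Equiv.Perm (Fin n) // ∀ i, cl (a i) = cl i} :=
    Nat.card_congr (Equiv.subtypeEquivRight fun w =>
      forall_congr' fun i => hcl (w i) i)
  have hYm : Nat.card (young n Rm)
      = Nat.card {b : Equiv.Perm (Fin n) // ∀ i, cm (b i) = cm i} :=
    Nat.card_congr (Equiv.subtypeEquivRight fun w =>
      forall_congr' fun i => hcm (w i) i)
  have hkey := key_count cl cm nu.parts
  have hYlpos : 0 < Nat.card {a : Equiv.Perm (Fin n) // ∀ i, cl (a i) = cl i} := by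
    haveI : Nonempty {a : Equiv.Perm (Fin n) // ∀ i, cl (a i) = cl i} :=
      ⟨⟨1, fun i => rfl⟩⟩
    exact Nat.card_pos
  have hYmpos : 0 < Nat.card {b : Equiv.Perm (Fin n) // ∀ i, cm (b i) = cm i} := by
    haveI : Nonempty {b : Equiv.Perm (Fin n) // ∀ i, cm (b i) = cm i} :=
      ⟨⟨1, fun i => rfl⟩⟩
    exact Nat.card_pos
  rw [hMcard, hPcard, hkey, hYl, hYm]
  have harith : ∀ (M K1 K2 : ℕ), 0 < K1 → 0 < K2 →
      (M : ℚ) = 1/((K1:ℚ)*(K2:ℚ)) * ((M * (K1 * K2) : ℕ) : ℚ) := by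
    intro M K1 K2 hk1 hk2
    have h1' : (K1:ℚ) ≠ 0 := by exact_mod_cast hk1.ne'
    have h2' : (K2:ℚ) ≠ 0 := by exact_mod_cast hk2.ne'
    push_cast
    field_simp
  exact harith _ _ _ hYlpos hYmpos
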